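/- arXiv:2207.06280 — 2 statements merged into one kernel-verified Lean document; each statement's English description precedes it below -/
import Mathlib

section
/- Fix a commutative ring k and a rational function (or polynomial) K(x, y) in two variables over k. For each n ≥ 0 let A_n = k[s_1, …, s_n]^{S_n} be symmetric polynomials, and define for f ∈ A_{n1}, g ∈ A_{n2} the shuffle product (f * g)(s_1, …, s_{n1+n2}) = Σ_σ σ · ( f(s_1,…,s_{n1}) · g(s_{n1+1},…,s_{n1+n2}) · Π_{i ≤ n1 < j} K(s_i, s_j) ), where σ runs over the (n1, n2)-shuffle permutations in S_{n1+n2}. Then this product is associative: for f ∈ A_{n1}, g ∈ A_{n2}, h ∈ A_{n3}, one has (f * g) * h = f * (g * h), both being equal to the sum over (n1,n2,n3)-shuffles of σ · ( f · g · h · Π_{i ≤ n1 < j} K(s_i,s_j) · Π_{i ≤ n1+n2 < j, i ≤ n1} K(s_i,s_j) · Π_{n1 < i ≤ n1+n2 < j} K(s_i,s_j) ). -/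
open Equiv MvPolynomial

open scoped Classical

/-- An `(n1, n2)`-shuffle. -/
def IsShuffle (n1 n2 : ℕ) (σ : Equiv.Perm (Fin (n1 + n2))) : Prop :=
  StrictMono (fun i : Fin n1 => σ (Fin.castAdd n2 i)) ∧
  StrictMono (fun j : Fin n2 => σ (Fin.natAdd n1 j))

/-- Extend a permutation of the first block by the identity on the second. -/
def extPermL {m n : ℕ} (τ : Equiv.Perm (Fin m)) : Equiv.Perm (Fin (m + n)) :=
  finSumFinEquiv.symm.trans ((τ.sumCongr (Equiv.refl (Fin n))).trans finSumFinEquiv)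

/-- Extend a permutation of the second block by the identity on the first. -/
def extPermR {m n : ℕ} (τ : Equiv.Perm (Fin n)) : Equiv.Perm (Fin (m + n)) :=
  finSumFinEquiv.symm.trans (((Equiv.refl (Fin m)).sumCongr τ).trans finSumFinEquiv)

@[simp] lemma extPermL_castAdd {m n : ℕ} (τ : Equiv.Perm (Fin m)) (i : Fin m) :
    extPermL (n := n) τ (Fin.castAdd n i) = Fin.castAdd n (τ i) := by
  simp [extPermL]

@[simp] lemma extPermL_natAdd {m n : ℕ} (τ : Equiv.Perm (Fin m)) (j : Fin n) :
    extPermL (n := n) τ (Fin.natAdd m j) = Fin.natAdd m j := by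
  simp [extPermL]

@[simp] lemma extPermR_castAdd {m n : ℕ} (τ : Equiv.Perm (Fin n)) (i : Fin m) :
    extPermR (m := m) τ (Fin.castAdd n i) = Fin.castAdd n i := by
  simp [extPermR]

@[simp] lemma extPermR_natAdd {m n : ℕ} (τ : Equiv.Perm (Fin n)) (j : Fin n) :
    extPermR (m := m) τ (Fin.natAdd m j) = Fin.natAdd m (τ j) := by
  simp [extPermR]

lemma perm_ext_add {m n : ℕ} {σ₁ σ₂ : Equiv.Perm (Fin (m + n))}
    (h1 : ∀ i : Fin m, σ₁ (Fin.castAdd n i) = σ₂ (Fin.castAdd n i))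
    (h2 : ∀ j : Fin n, σ₁ (Fin.natAdd m j) = σ₂ (Fin.natAdd m j)) : σ₁ = σ₂ :=
  Equiv.ext fun x => Fin.addCases h1 h2 x

lemma extPermL_injective {m n : ℕ} : Function.Injective (extPermL (m := m) (n := n)) := by
  intro τ₁ τ₂ h
  ext i
  have h2 : Fin.castAdd n (τ₁ i) = Fin.castAdd n (τ₂ i) := by
    rw [← extPermL_castAdd τ₁ i, ← extPermL_castAdd τ₂ i, h]
  have := congrArg Fin.val h2
  simp only [Fin.coe_castAdd] at this
  exact congrArg Fin.val (Fin.ext this)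

lemma extPermR_injective {m n : ℕ} : Function.Injective (extPermR (m := m) (n := n)) := by
  intro τ₁ τ₂ h
  ext i
  have h2 : Fin.natAdd m (τ₁ i) = Fin.natAdd m (τ₂ i) := by
    rw [← extPermR_natAdd τ₁ i, ← extPermR_natAdd τ₂ i, h]
  have := congrArg Fin.val h2
  simp only [Fin.coe_natAdd] at this
  exact congrArg Fin.val (Fin.ext (by omega))

/-- There is a shuffle with prescribed (strictly monotone) first-block part. -/
lemma exists_shuffle_fst {m n : ℕ} (a : Fin m → Fin (m + n)) (ha : StrictMono a) :
    ∃ σ : Equiv.Perm (Fin (m + n)), IsShuffle m n σ ∧ ∀ i, σ (Fin.castAdd n i) = a i := by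
  classical
  set A : Finset (Fin (m + n)) := Finset.univ.image a with hA
  have hcard : A.card = m := by
    rw [hA, Finset.card_image_of_injective _ ha.injective, Finset.card_univ, Fintype.card_fin]
  have hccard : Aᶜ.card = n := by
    rw [Finset.card_compl, hcard, Fintype.card_fin]; omega
  let eA : Fin m ≃ {x // x ∈ A} := (A.orderIsoOfFin hcard).toEquiv
  let eAc : Fin n ≃ {x // ¬ x ∈ A} :=
    (Aᶜ.orderIsoOfFin hccard).toEquiv.trans
      (Equiv.subtypeEquivRight (fun x => Finset.mem_compl))
  let σ : Equiv.Perm (Fin (m + n)) :=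
    finSumFinEquiv.symm.trans ((eA.sumCongr eAc).trans (Equiv.sumCompl (· ∈ A)))
  have hc : ∀ i, σ (Fin.castAdd n i) = A.orderEmbOfFin hcard i := by
    intro i
    show (Equiv.sumCompl (· ∈ A)) ((eA.sumCongr eAc) (finSumFinEquiv.symm (Fin.castAdd n i))) = _
    rw [finSumFinEquiv_symm_apply_castAdd]
    simp only [Equiv.sumCongr_apply, Sum.map_inl, Equiv.sumCompl_apply_inl]
    exact A.coe_orderIsoOfFin_apply hcard i
  have hn : ∀ j, σ (Fin.natAdd m j) = Aᶜ.orderEmbOfFin hccard j := by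
    intro j
    show (Equiv.sumCompl (· ∈ A)) ((eA.sumCongr eAc) (finSumFinEquiv.symm (Fin.natAdd m j))) = _
    rw [finSumFinEquiv_symm_apply_natAdd]
    simp only [Equiv.sumCongr_apply, Sum.map_inr, Equiv.sumCompl_apply_inr]
    simp only [eAc, Equiv.trans_apply, Equiv.subtypeEquivRight_apply]
    exact Aᶜ.coe_orderIsoOfFin_apply hccard j
  have haeq : ∀ i, a i = A.orderEmbOfFin hcard i := by
    have := Finset.orderEmbOfFin_unique hcard (f := a) (fun x => by simp [hA]) ha
    exact fun i => congrFun this i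
  refine ⟨σ, ⟨?_, ?_⟩, fun i => by rw [hc, haeq]⟩
  · have he : (fun i : Fin m => σ (Fin.castAdd n i)) = fun i => A.orderEmbOfFin hcard i :=
      funext hc
    rw [he]; exact (A.orderEmbOfFin hcard).strictMono
  · have he : (fun j : Fin n => σ (Fin.natAdd m j)) = fun j => Aᶜ.orderEmbOfFin hccard j :=
      funext hn
    rw [he]; exact (Aᶜ.orderEmbOfFin hccard).strictMono

/-- There is a shuffle with prescribed (strictly monotone) second-block part. -/
lemma exists_shuffle_snd {m n : ℕ} (b : Fin n → Fin (m + n)) (hb : StrictMono b) :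
    ∃ σ : Equiv.Perm (Fin (m + n)), IsShuffle m n σ ∧ ∀ j, σ (Fin.natAdd m j) = b j := by
  classical
  set A : Finset (Fin (m + n)) := Finset.univ.image b with hA
  have hcard : A.card = n := by
    rw [hA, Finset.card_image_of_injective _ hb.injective, Finset.card_univ, Fintype.card_fin]
  have hccard : Aᶜ.card = m := by
    rw [Finset.card_compl, hcard, Fintype.card_fin]; omega
  let eA : Fin n ≃ {x // x ∈ A} := (A.orderIsoOfFin hcard).toEquiv
  let eAc : Fin m ≃ {x // ¬ x ∈ A} :=
    (Aᶜ.orderIsoOfFin hccard).toEquiv.trans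
      (Equiv.subtypeEquivRight (fun x => Finset.mem_compl))
  let eA' : Fin n ≃ {x // ¬ x ∉ A} :=
    eA.trans (Equiv.subtypeEquivRight (fun x => not_not.symm))
  let σ : Equiv.Perm (Fin (m + n)) :=
    finSumFinEquiv.symm.trans ((eAc.sumCongr eA').trans (Equiv.sumCompl (· ∉ A)))
  have hc : ∀ i, σ (Fin.castAdd n i) = Aᶜ.orderEmbOfFin hccard i := by
    intro i
    show (Equiv.sumCompl (· ∉ A)) ((eAc.sumCongr eA') (finSumFinEquiv.symm (Fin.castAdd n i))) = _
    rw [finSumFinEquiv_symm_apply_castAdd]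
    simp only [Equiv.sumCongr_apply, Sum.map_inl, Equiv.sumCompl_apply_inl]
    simp only [eAc, Equiv.trans_apply, Equiv.subtypeEquivRight_apply]
    exact Aᶜ.coe_orderIsoOfFin_apply hccard i
  have hn : ∀ j, σ (Fin.natAdd m j) = A.orderEmbOfFin hcard j := by
    intro j
    show (Equiv.sumCompl (· ∉ A)) ((eAc.sumCongr eA') (finSumFinEquiv.symm (Fin.natAdd m j))) = _
    rw [finSumFinEquiv_symm_apply_natAdd]
    simp only [Equiv.sumCongr_apply, Sum.map_inr, Equiv.sumCompl_apply_inr]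
    simp only [eA', eA, Equiv.trans_apply, Equiv.subtypeEquivRight_apply]
    exact A.coe_orderIsoOfFin_apply hcard j
  have hbeq : ∀ j, b j = A.orderEmbOfFin hcard j := by
    have := Finset.orderEmbOfFin_unique hcard (f := b) (fun x => by simp [hA]) hb
    exact fun j => congrFun this j
  refine ⟨σ, ⟨?_, ?_⟩, fun j => by rw [hn, hbeq]⟩
  · have he : (fun i : Fin m => σ (Fin.castAdd n i)) = fun i => Aᶜ.orderEmbOfFin hccard i :=
      funext hc
    rw [he]; exact (Aᶜ.orderEmbOfFin hccard).strictMono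
  · have he : (fun j : Fin n => σ (Fin.natAdd m j)) = fun j => A.orderEmbOfFin hcard j :=
      funext hn
    rw [he]; exact (A.orderEmbOfFin hcard).strictMono

/-- An `(n1, n2, n3)`-shuffle. -/
def IsShuffle3 (n1 n2 n3 : ℕ) (σ : Equiv.Perm (Fin (n1 + n2 + n3))) : Prop :=
  StrictMono (fun i : Fin n1 => σ (Fin.castAdd n3 (Fin.castAdd n2 i))) ∧
  StrictMono (fun j : Fin n2 => σ (Fin.castAdd n3 (Fin.natAdd n1 j))) ∧
  StrictMono (fun l : Fin n3 => σ (Fin.natAdd (n1 + n2) l))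

/-- The right-associated version of a triple shuffle. -/
def IsShuffle3R (n1 n2 n3 : ℕ) (ρ : Equiv.Perm (Fin (n1 + (n2 + n3)))) : Prop :=
  StrictMono (fun i : Fin n1 => ρ (Fin.castAdd (n2 + n3) i)) ∧
  StrictMono (fun j : Fin n2 => ρ (Fin.natAdd n1 (Fin.castAdd n3 j))) ∧
  StrictMono (fun l : Fin n3 => ρ (Fin.natAdd n1 (Fin.natAdd n2 l)))

lemma Equiv.Perm.inv_apply_self {α : Type*} (f : Equiv.Perm α) (x : α) : f⁻¹ (f x) = x :=
  f.symm_apply_apply x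

lemma Equiv.Perm.apply_inv_self {α : Type*} (f : Equiv.Perm α) (x : α) : f (f⁻¹ x) = x :=
  f.apply_symm_apply x

lemma sum_shuffle_pairs_left {n1 n2 n3 : ℕ} {M : Type*} [AddCommMonoid M]
    (F : Equiv.Perm (Fin (n1 + n2 + n3)) → M) :
    (∑ σ : Equiv.Perm (Fin (n1 + n2 + n3)), if IsShuffle (n1 + n2) n3 σ then
        (∑ τ : Equiv.Perm (Fin (n1 + n2)), if IsShuffle n1 n2 τ then F (σ * extPermL τ) else 0)
      else 0)
    = ∑ ρ : Equiv.Perm (Fin (n1 + n2 + n3)), if IsShuffle3 n1 n2 n3 ρ then F ρ else 0 := by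
  classical
  rw [← Finset.sum_filter, ← Finset.sum_filter]
  have hinner : ∀ σ : Equiv.Perm (Fin (n1 + n2 + n3)),
      (∑ τ : Equiv.Perm (Fin (n1 + n2)), if IsShuffle n1 n2 τ then F (σ * extPermL τ) else 0)
      = ∑ τ ∈ Finset.univ.filter (IsShuffle n1 n2), F (σ * extPermL τ) :=
    fun σ => (Finset.sum_filter _ _).symm
  simp only [hinner]
  rw [← Finset.sum_product']
  refine Finset.sum_nbij (fun p => p.1 * extPermL p.2) ?_ ?_ ?_ (fun p _ => rfl)
  · rintro ⟨σ, τ⟩ hp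
    simp only [Finset.mem_product, Finset.mem_filter, Finset.mem_univ, true_and] at hp ⊢
    obtain ⟨hσ, hτ⟩ := hp
    refine ⟨?_, ?_, ?_⟩
    · have he : (fun i : Fin n1 => ((σ * extPermL τ : Equiv.Perm (Fin (n1 + n2 + n3)))) (Fin.castAdd n3 (Fin.castAdd n2 i)))
          = fun i => σ (Fin.castAdd n3 (τ (Fin.castAdd n2 i))) :=
        funext fun i => by simp [Equiv.Perm.mul_apply]
      rw [he]; exact hσ.1.comp hτ.1
    · have he : (fun j : Fin n2 => ((σ * extPermL τ : Equiv.Perm (Fin (n1 + n2 + n3)))) (Fin.castAdd n3 (Fin.natAdd n1 j)))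
          = fun j => σ (Fin.castAdd n3 (τ (Fin.natAdd n1 j))) :=
        funext fun j => by simp [Equiv.Perm.mul_apply]
      rw [he]; exact hσ.1.comp hτ.2
    · have he : (fun l : Fin n3 => ((σ * extPermL τ : Equiv.Perm (Fin (n1 + n2 + n3)))) (Fin.natAdd (n1 + n2) l))
          = fun l => σ (Fin.natAdd (n1 + n2) l) :=
        funext fun l => by simp [Equiv.Perm.mul_apply]
      rw [he]; exact hσ.2
  · rintro ⟨σ₁, τ₁⟩ h1 ⟨σ₂, τ₂⟩ h2 heq
    simp only [Finset.coe_product, Set.mem_prod, Finset.mem_coe, Finset.mem_filter,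
      Finset.mem_univ, true_and] at h1 h2
    have heq' : σ₁ * extPermL τ₁ = σ₂ * extPermL τ₂ := heq
    have hσ : σ₁ = σ₂ := by
      apply perm_ext_add (fun i => ?_) (fun j => ?_)
      · have hr1 : Set.range (fun x : Fin (n1 + n2) => σ₁ (Fin.castAdd n3 x))
            = Set.range (fun x : Fin (n1 + n2) => ((σ₁ * extPermL τ₁ : Equiv.Perm (Fin (n1 + n2 + n3)))) (Fin.castAdd n3 x)) := by
          have : (fun x : Fin (n1 + n2) => ((σ₁ * extPermL τ₁ : Equiv.Perm (Fin (n1 + n2 + n3)))) (Fin.castAdd n3 x))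
              = (fun x : Fin (n1 + n2) => σ₁ (Fin.castAdd n3 x)) ∘ τ₁ :=
            funext fun x => by simp [Equiv.Perm.mul_apply]
          rw [this, τ₁.surjective.range_comp]
        have hr2 : Set.range (fun x : Fin (n1 + n2) => σ₂ (Fin.castAdd n3 x))
            = Set.range (fun x : Fin (n1 + n2) => ((σ₂ * extPermL τ₂ : Equiv.Perm (Fin (n1 + n2 + n3)))) (Fin.castAdd n3 x)) := by
          have : (fun x : Fin (n1 + n2) => ((σ₂ * extPermL τ₂ : Equiv.Perm (Fin (n1 + n2 + n3)))) (Fin.castAdd n3 x))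
              = (fun x : Fin (n1 + n2) => σ₂ (Fin.castAdd n3 x)) ∘ τ₂ :=
            funext fun x => by simp [Equiv.Perm.mul_apply]
          rw [this, τ₂.surjective.range_comp]
        have hr : Set.range (fun x : Fin (n1 + n2) => σ₁ (Fin.castAdd n3 x))
            = Set.range (fun x : Fin (n1 + n2) => σ₂ (Fin.castAdd n3 x)) := by
          rw [hr1, hr2, heq']
        haveI : WellFoundedLT (Fin (n1 + n2)) := inferInstance
        exact congrFun ((StrictMono.range_inj
          (f := fun x : Fin (n1 + n2) => σ₁ (Fin.castAdd n3 x))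
          (g := fun x : Fin (n1 + n2) => σ₂ (Fin.castAdd n3 x)) h1.1.1 h2.1.1).mp hr) i
      · have := congrArg (fun ρ : Equiv.Perm (Fin (n1 + n2 + n3)) =>
          ρ (Fin.natAdd (n1 + n2) j)) heq'
        simpa [Equiv.Perm.mul_apply] using this
    have hτ : τ₁ = τ₂ := by
      apply extPermL_injective (m := n1 + n2) (n := n3)
      have := heq'
      rw [hσ] at this
      exact mul_left_cancel this
    exact Prod.ext hσ hτ
  · intro ρ hρmem
    have hρ : IsShuffle3 n1 n2 n3 ρ := by
      simpa using hρmem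
    obtain ⟨σ, hσshuf, hσn⟩ := exists_shuffle_snd (m := n1 + n2) (n := n3)
      (fun l => ρ (Fin.natAdd (n1 + n2) l)) hρ.2.2
    set μ : Equiv.Perm (Fin (n1 + n2 + n3)) := σ⁻¹ * ρ with hμ
    have hfix : ∀ l, μ (Fin.natAdd (n1 + n2) l) = Fin.natAdd (n1 + n2) l := by
      intro l
      rw [hμ, Equiv.Perm.mul_apply, ← hσn l, Equiv.Perm.inv_apply_self]
    have hfix' : ∀ l, μ⁻¹ (Fin.natAdd (n1 + n2) l) = Fin.natAdd (n1 + n2) l := by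
      intro l
      conv_lhs => rw [← hfix l]
      exact Equiv.Perm.inv_apply_self μ _
    have hlt : ∀ x : Fin (n1 + n2), (μ (Fin.castAdd n3 x) : ℕ) < n1 + n2 := by
      intro x
      by_contra hge
      push_neg at hge
      have hisLt := (μ (Fin.castAdd n3 x)).isLt
      set l : Fin n3 := ⟨(μ (Fin.castAdd n3 x) : ℕ) - (n1 + n2), by omega⟩ with hl
      have hv : μ (Fin.castAdd n3 x) = Fin.natAdd (n1 + n2) l := by
        apply Fin.ext
        simp only [Fin.coe_natAdd, hl]
        omega
      have h3 := hfix' l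
      rw [← hv, Equiv.Perm.inv_apply_self μ] at h3
      have h4 := congrArg Fin.val h3
      simp only [Fin.coe_castAdd, Fin.coe_natAdd, hl] at h4
      have := x.isLt
      omega
    have hlt' : ∀ y : Fin (n1 + n2), (μ⁻¹ (Fin.castAdd n3 y) : ℕ) < n1 + n2 := by
      intro y
      by_contra hge
      push_neg at hge
      have hisLt := (μ⁻¹ (Fin.castAdd n3 y)).isLt
      set l : Fin n3 := ⟨(μ⁻¹ (Fin.castAdd n3 y) : ℕ) - (n1 + n2), by omega⟩ with hl
      have hv : μ⁻¹ (Fin.castAdd n3 y) = Fin.natAdd (n1 + n2) l := by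
        apply Fin.ext
        simp only [Fin.coe_natAdd, hl]
        omega
      have h3 := hfix l
      rw [← hv, Equiv.Perm.apply_inv_self μ] at h3
      have h4 := congrArg Fin.val h3
      simp only [Fin.coe_castAdd, Fin.coe_natAdd, hl] at h4
      have := y.isLt
      omega
    let τ : Equiv.Perm (Fin (n1 + n2)) :=
      { toFun := fun x => ⟨(μ (Fin.castAdd n3 x) : ℕ), hlt x⟩
        invFun := fun y => ⟨(μ⁻¹ (Fin.castAdd n3 y) : ℕ), hlt' y⟩
        left_inv := fun x => by
          apply Fin.ext
          have hcast : Fin.castAdd n3 (⟨(μ (Fin.castAdd n3 x) : ℕ), hlt x⟩ : Fin (n1 + n2))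
              = μ (Fin.castAdd n3 x) := Fin.ext rfl
          simp only [hcast, Equiv.Perm.inv_apply_self, Fin.coe_castAdd]
        right_inv := fun y => by
          apply Fin.ext
          have hcast : Fin.castAdd n3 (⟨(μ⁻¹ (Fin.castAdd n3 y) : ℕ), hlt' y⟩ : Fin (n1 + n2))
              = μ⁻¹ (Fin.castAdd n3 y) := Fin.ext rfl
          simp only [hcast, Equiv.Perm.apply_inv_self, Fin.coe_castAdd] }
    have hτcast : ∀ x : Fin (n1 + n2), Fin.castAdd n3 (τ x) = μ (Fin.castAdd n3 x) :=
      fun x => Fin.ext rfl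
    have hkey : ∀ x : Fin (n1 + n2), σ (Fin.castAdd n3 (τ x)) = ρ (Fin.castAdd n3 x) := by
      intro x
      rw [hτcast x, hμ, Equiv.Perm.mul_apply, Equiv.Perm.apply_inv_self]
    have hext : extPermL τ = μ :=
      perm_ext_add (fun x => by rw [extPermL_castAdd, hτcast x])
        (fun l => by rw [extPermL_natAdd, hfix l])
    have hτshuf : IsShuffle n1 n2 τ := by
      constructor
      · intro i i' hii
        have h5 := hρ.1 hii
        simp only at h5
        rw [← hkey, ← hkey] at h5
        exact hσshuf.1.lt_iff_lt.mp h5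
      · intro j j' hjj
        have h5 := hρ.2.1 hjj
        simp only at h5
        rw [← hkey, ← hkey] at h5
        exact hσshuf.1.lt_iff_lt.mp h5
    refine ⟨(σ, τ), ?_, ?_⟩
    · simp only [Finset.coe_product, Set.mem_prod, Finset.mem_coe, Finset.mem_filter,
        Finset.mem_univ, true_and]
      exact ⟨hσshuf, hτshuf⟩
    · show σ * extPermL τ = ρ
      rw [hext, hμ, mul_inv_cancel_left]

lemma sum_shuffle_pairs_right {n1 n2 n3 : ℕ} {M : Type*} [AddCommMonoid M]
    (F : Equiv.Perm (Fin (n1 + (n2 + n3))) → M) :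
    (∑ σ : Equiv.Perm (Fin (n1 + (n2 + n3))), if IsShuffle n1 (n2 + n3) σ then
        (∑ τ : Equiv.Perm (Fin (n2 + n3)), if IsShuffle n2 n3 τ then F (σ * extPermR τ) else 0)
      else 0)
    = ∑ ρ : Equiv.Perm (Fin (n1 + (n2 + n3))), if IsShuffle3R n1 n2 n3 ρ then F ρ else 0 := by
  classical
  rw [← Finset.sum_filter, ← Finset.sum_filter]
  have hinner : ∀ σ : Equiv.Perm (Fin (n1 + (n2 + n3))),
      (∑ τ : Equiv.Perm (Fin (n2 + n3)), if IsShuffle n2 n3 τ then F (σ * extPermR τ) else 0)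
      = ∑ τ ∈ Finset.univ.filter (IsShuffle n2 n3), F (σ * extPermR τ) :=
    fun σ => (Finset.sum_filter _ _).symm
  simp only [hinner]
  rw [← Finset.sum_product']
  refine Finset.sum_nbij (fun p => p.1 * extPermR p.2) ?_ ?_ ?_ (fun p _ => rfl)
  · rintro ⟨σ, τ⟩ hp
    simp only [Finset.mem_product, Finset.mem_filter, Finset.mem_univ, true_and] at hp ⊢
    obtain ⟨hσ, hτ⟩ := hp
    refine ⟨?_, ?_, ?_⟩
    · have he : (fun i : Fin n1 =>
          ((σ * extPermR τ : Equiv.Perm (Fin (n1 + (n2 + n3))))) (Fin.castAdd (n2 + n3) i))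
          = fun i => σ (Fin.castAdd (n2 + n3) i) :=
        funext fun i => by simp [Equiv.Perm.mul_apply]
      rw [he]; exact hσ.1
    · have he : (fun j : Fin n2 =>
          ((σ * extPermR τ : Equiv.Perm (Fin (n1 + (n2 + n3))))) (Fin.natAdd n1 (Fin.castAdd n3 j)))
          = fun j => σ (Fin.natAdd n1 (τ (Fin.castAdd n3 j))) :=
        funext fun j => by simp [Equiv.Perm.mul_apply]
      rw [he]; exact hσ.2.comp hτ.1
    · have he : (fun l : Fin n3 =>
          ((σ * extPermR τ : Equiv.Perm (Fin (n1 + (n2 + n3))))) (Fin.natAdd n1 (Fin.natAdd n2 l)))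
          = fun l => σ (Fin.natAdd n1 (τ (Fin.natAdd n2 l))) :=
        funext fun l => by simp [Equiv.Perm.mul_apply]
      rw [he]; exact hσ.2.comp hτ.2
  · rintro ⟨σ₁, τ₁⟩ h1 ⟨σ₂, τ₂⟩ h2 heq
    simp only [Finset.coe_product, Set.mem_prod, Finset.mem_coe, Finset.mem_filter,
      Finset.mem_univ, true_and] at h1 h2
    have heq' : σ₁ * extPermR τ₁ = σ₂ * extPermR τ₂ := heq
    have hσ : σ₁ = σ₂ := by
      apply perm_ext_add (fun i => ?_) (fun j => ?_)
      · have := congrArg (fun ρ : Equiv.Perm (Fin (n1 + (n2 + n3))) =>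
          ρ (Fin.castAdd (n2 + n3) i)) heq'
        simpa [Equiv.Perm.mul_apply] using this
      · have hr1 : Set.range (fun y : Fin (n2 + n3) => σ₁ (Fin.natAdd n1 y))
            = Set.range (fun y : Fin (n2 + n3) =>
              ((σ₁ * extPermR τ₁ : Equiv.Perm (Fin (n1 + (n2 + n3))))) (Fin.natAdd n1 y)) := by
          have he : (fun y : Fin (n2 + n3) =>
              ((σ₁ * extPermR τ₁ : Equiv.Perm (Fin (n1 + (n2 + n3))))) (Fin.natAdd n1 y))
              = (fun y : Fin (n2 + n3) => σ₁ (Fin.natAdd n1 y)) ∘ τ₁ :=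
            funext fun y => by simp [Equiv.Perm.mul_apply]
          rw [he, τ₁.surjective.range_comp]
        have hr2 : Set.range (fun y : Fin (n2 + n3) => σ₂ (Fin.natAdd n1 y))
            = Set.range (fun y : Fin (n2 + n3) =>
              ((σ₂ * extPermR τ₂ : Equiv.Perm (Fin (n1 + (n2 + n3))))) (Fin.natAdd n1 y)) := by
          have he : (fun y : Fin (n2 + n3) =>
              ((σ₂ * extPermR τ₂ : Equiv.Perm (Fin (n1 + (n2 + n3))))) (Fin.natAdd n1 y))
              = (fun y : Fin (n2 + n3) => σ₂ (Fin.natAdd n1 y)) ∘ τ₂ :=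
            funext fun y => by simp [Equiv.Perm.mul_apply]
          rw [he, τ₂.surjective.range_comp]
        have hr : Set.range (fun y : Fin (n2 + n3) => σ₁ (Fin.natAdd n1 y))
            = Set.range (fun y : Fin (n2 + n3) => σ₂ (Fin.natAdd n1 y)) := by
          rw [hr1, hr2, heq']
        haveI : WellFoundedLT (Fin (n2 + n3)) := inferInstance
        exact congrFun ((StrictMono.range_inj
          (f := fun y : Fin (n2 + n3) => σ₁ (Fin.natAdd n1 y))
          (g := fun y : Fin (n2 + n3) => σ₂ (Fin.natAdd n1 y)) h1.1.2 h2.1.2).mp hr) j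
    have hτ : τ₁ = τ₂ := by
      apply extPermR_injective (m := n1) (n := n2 + n3)
      have := heq'
      rw [hσ] at this
      exact mul_left_cancel this
    exact Prod.ext hσ hτ
  · intro ρ hρmem
    have hρ : IsShuffle3R n1 n2 n3 ρ := by
      simpa using hρmem
    obtain ⟨σ, hσshuf, hσc⟩ := exists_shuffle_fst (m := n1) (n := n2 + n3)
      (fun i => ρ (Fin.castAdd (n2 + n3) i)) hρ.1
    set μ : Equiv.Perm (Fin (n1 + (n2 + n3))) := σ⁻¹ * ρ with hμ
    have hfix : ∀ i, μ (Fin.castAdd (n2 + n3) i) = Fin.castAdd (n2 + n3) i := by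
      intro i
      rw [hμ, Equiv.Perm.mul_apply, ← hσc i, Equiv.Perm.inv_apply_self]
    have hfix' : ∀ i, μ⁻¹ (Fin.castAdd (n2 + n3) i) = Fin.castAdd (n2 + n3) i := by
      intro i
      conv_lhs => rw [← hfix i]
      exact Equiv.Perm.inv_apply_self μ _
    have hge : ∀ y : Fin (n2 + n3), n1 ≤ (μ (Fin.natAdd n1 y) : ℕ) := by
      intro y
      by_contra hl
      push_neg at hl
      set x : Fin n1 := ⟨(μ (Fin.natAdd n1 y) : ℕ), hl⟩ with hx
      have hv : μ (Fin.natAdd n1 y) = Fin.castAdd (n2 + n3) x := by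
        apply Fin.ext; simp [hx]
      have h3 := hfix' x
      rw [← hv, Equiv.Perm.inv_apply_self μ] at h3
      have h4 := congrArg Fin.val h3
      simp only [Fin.coe_castAdd, Fin.coe_natAdd, hx] at h4
      omega
    have hge' : ∀ y : Fin (n2 + n3), n1 ≤ (μ⁻¹ (Fin.natAdd n1 y) : ℕ) := by
      intro y
      by_contra hl
      push_neg at hl
      set x : Fin n1 := ⟨(μ⁻¹ (Fin.natAdd n1 y) : ℕ), hl⟩ with hx
      have hv : μ⁻¹ (Fin.natAdd n1 y) = Fin.castAdd (n2 + n3) x := by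
        apply Fin.ext; simp [hx]
      have h3 := hfix x
      rw [← hv, Equiv.Perm.apply_inv_self μ] at h3
      have h4 := congrArg Fin.val h3
      simp only [Fin.coe_castAdd, Fin.coe_natAdd, hx] at h4
      omega
    have hmem : ∀ y : Fin (n2 + n3), (μ (Fin.natAdd n1 y) : ℕ) - n1 < n2 + n3 := by
      intro y; have := (μ (Fin.natAdd n1 y)).isLt; have := hge y; omega
    have hmem' : ∀ y : Fin (n2 + n3), (μ⁻¹ (Fin.natAdd n1 y) : ℕ) - n1 < n2 + n3 := by
      intro y; have := (μ⁻¹ (Fin.natAdd n1 y)).isLt; have := hge' y; omega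
    let τ : Equiv.Perm (Fin (n2 + n3)) :=
      { toFun := fun y => ⟨(μ (Fin.natAdd n1 y) : ℕ) - n1, hmem y⟩
        invFun := fun y => ⟨(μ⁻¹ (Fin.natAdd n1 y) : ℕ) - n1, hmem' y⟩
        left_inv := fun y => by
          apply Fin.ext
          have hcast : Fin.natAdd n1 (⟨(μ (Fin.natAdd n1 y) : ℕ) - n1, hmem y⟩ : Fin (n2 + n3))
              = μ (Fin.natAdd n1 y) := by
            apply Fin.ext
            simp only [Fin.coe_natAdd]
            have := hge y
            omega
          simp only [hcast, Equiv.Perm.inv_apply_self, Fin.coe_natAdd]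
          omega
        right_inv := fun y => by
          apply Fin.ext
          have hcast : Fin.natAdd n1 (⟨(μ⁻¹ (Fin.natAdd n1 y) : ℕ) - n1, hmem' y⟩ : Fin (n2 + n3))
              = μ⁻¹ (Fin.natAdd n1 y) := by
            apply Fin.ext
            simp only [Fin.coe_natAdd]
            have := hge' y
            omega
          simp only [hcast, Equiv.Perm.apply_inv_self, Fin.coe_natAdd]
          omega }
    have hτnat : ∀ y : Fin (n2 + n3), Fin.natAdd n1 (τ y) = μ (Fin.natAdd n1 y) := by
      intro y
      apply Fin.ext
      show n1 + ((μ (Fin.natAdd n1 y) : ℕ) - n1) = _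
      have := hge y
      omega
    have hkey : ∀ y : Fin (n2 + n3), σ (Fin.natAdd n1 (τ y)) = ρ (Fin.natAdd n1 y) := by
      intro y
      rw [hτnat y, hμ, Equiv.Perm.mul_apply, Equiv.Perm.apply_inv_self]
    have hext : extPermR τ = μ :=
      perm_ext_add (fun i => by rw [extPermR_castAdd, hfix i])
        (fun y => by rw [extPermR_natAdd, hτnat y])
    have hτshuf : IsShuffle n2 n3 τ := by
      constructor
      · intro j j' hjj
        have h5 := hρ.2.1 hjj
        simp only at h5
        rw [← hkey, ← hkey] at h5
        exact hσshuf.2.lt_iff_lt.mp h5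
      · intro l l' hll
        have h5 := hρ.2.2 hll
        simp only at h5
        rw [← hkey, ← hkey] at h5
        exact hσshuf.2.lt_iff_lt.mp h5
    refine ⟨(σ, τ), ?_, ?_⟩
    · simp only [Finset.coe_product, Set.mem_prod, Finset.mem_coe, Finset.mem_filter,
        Finset.mem_univ, true_and]
      exact ⟨hσshuf, hτshuf⟩
    · show σ * extPermR τ = ρ
      rw [hext, hμ, mul_inv_cancel_left]

variable {k : Type*} [CommRing k]

/-- The two-variable kernel `K(x,y)` evaluated at the variables `s_i`, `s_j`. -/
noncomputable def kernelAt (K : MvPolynomial (Fin 2) k) {n : ℕ} (i j : Fin n) :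
    MvPolynomial (Fin n) k :=
  aeval ![(X i : MvPolynomial (Fin n) k), X j] K

lemma rename_kernelAt {n N : ℕ} (K : MvPolynomial (Fin 2) k) (φ : Fin n → Fin N) (i j : Fin n) :
    rename φ (kernelAt K i j) = kernelAt K (φ i) (φ j) := by
  unfold kernelAt
  have h1 : (rename φ) (aeval ![(X i : MvPolynomial (Fin n) k), X j] K)
      = ((rename φ).comp (aeval ![(X i : MvPolynomial (Fin n) k), X j])) K := rfl
  rw [h1, comp_aeval]
  have hv : (fun b => (rename φ) (![(X i : MvPolynomial (Fin n) k), X j] b))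
      = ![(X (φ i) : MvPolynomial (Fin N) k), X (φ j)] := by
    funext b; fin_cases b <;> simp
  rw [hv]

/-- Big product appearing in `shufMul3`. -/
noncomputable def bigL (K : MvPolynomial (Fin 2) k) {n1 n2 n3 : ℕ}
    (f : MvPolynomial (Fin n1) k) (g : MvPolynomial (Fin n2) k)
    (h : MvPolynomial (Fin n3) k) : MvPolynomial (Fin (n1 + n2 + n3)) k :=
  rename (fun i : Fin n1 => Fin.castAdd n3 (Fin.castAdd n2 i)) f *
    rename (fun j : Fin n2 => Fin.castAdd n3 (Fin.natAdd n1 j)) g *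
    rename (Fin.natAdd (n1 + n2)) h *
    (∏ i : Fin n1, ∏ j : Fin n2,
      kernelAt K (Fin.castAdd n3 (Fin.castAdd n2 i)) (Fin.castAdd n3 (Fin.natAdd n1 j))) *
    (∏ i : Fin n1, ∏ l : Fin n3,
      kernelAt K (Fin.castAdd n3 (Fin.castAdd n2 i)) (Fin.natAdd (n1 + n2) l)) *
    (∏ j : Fin n2, ∏ l : Fin n3,
      kernelAt K (Fin.castAdd n3 (Fin.natAdd n1 j)) (Fin.natAdd (n1 + n2) l))

/-- Big product, right-associated variant. -/
noncomputable def bigR (K : MvPolynomial (Fin 2) k) {n1 n2 n3 : ℕ}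
    (f : MvPolynomial (Fin n1) k) (g : MvPolynomial (Fin n2) k)
    (h : MvPolynomial (Fin n3) k) : MvPolynomial (Fin (n1 + (n2 + n3))) k :=
  rename (Fin.castAdd (n2 + n3)) f *
    rename (fun j : Fin n2 => Fin.natAdd n1 (Fin.castAdd n3 j)) g *
    rename (fun l : Fin n3 => Fin.natAdd n1 (Fin.natAdd n2 l)) h *
    (∏ i : Fin n1, ∏ j : Fin n2,
      kernelAt K (Fin.castAdd (n2 + n3) i) (Fin.natAdd n1 (Fin.castAdd n3 j))) *
    (∏ i : Fin n1, ∏ l : Fin n3,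
      kernelAt K (Fin.castAdd (n2 + n3) i) (Fin.natAdd n1 (Fin.natAdd n2 l))) *
    (∏ j : Fin n2, ∏ l : Fin n3,
      kernelAt K (Fin.natAdd n1 (Fin.castAdd n3 j)) (Fin.natAdd n1 (Fin.natAdd n2 l)))

lemma prod_left_eq (K : MvPolynomial (Fin 2) k) {n1 n2 n3 : ℕ}
    (f : MvPolynomial (Fin n1) k) (g : MvPolynomial (Fin n2) k)
    (h : MvPolynomial (Fin n3) k) :
    rename (Fin.castAdd n3) (rename (Fin.castAdd n2) f * rename (Fin.natAdd n1) g *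
        ∏ i : Fin n1, ∏ j : Fin n2, kernelAt K (Fin.castAdd n2 i) (Fin.natAdd n1 j)) *
      rename (Fin.natAdd (n1 + n2)) h *
      ∏ x : Fin (n1 + n2), ∏ l : Fin n3, kernelAt K (Fin.castAdd n3 x) (Fin.natAdd (n1 + n2) l)
    = bigL K f g h := by
  unfold bigL
  simp only [map_mul, map_prod, rename_rename, rename_kernelAt, Function.comp_def]
  rw [Fin.prod_univ_add
    (f := fun x : Fin (n1 + n2) => ∏ l : Fin n3,
      kernelAt K (Fin.castAdd n3 x) (Fin.natAdd (n1 + n2) l))]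
  ring

lemma summand_left (K : MvPolynomial (Fin 2) k) {n1 n2 n3 : ℕ}
    (f : MvPolynomial (Fin n1) k) (g : MvPolynomial (Fin n2) k)
    (h : MvPolynomial (Fin n3) k) (σ : Equiv.Perm (Fin (n1 + n2 + n3)))
    (τ : Equiv.Perm (Fin (n1 + n2))) :
    rename (⇑σ) (rename (Fin.castAdd n3)
        (rename (⇑τ) (rename (Fin.castAdd n2) f * rename (Fin.natAdd n1) g *
          ∏ i : Fin n1, ∏ j : Fin n2, kernelAt K (Fin.castAdd n2 i) (Fin.natAdd n1 j))) *
      rename (Fin.natAdd (n1 + n2)) h *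
      ∏ x : Fin (n1 + n2), ∏ l : Fin n3, kernelAt K (Fin.castAdd n3 x) (Fin.natAdd (n1 + n2) l))
    = rename (⇑(σ * extPermL τ : Equiv.Perm (Fin (n1 + n2 + n3)))) (bigL K f g h) := by
  set P := rename (Fin.castAdd n2) f * rename (Fin.natAdd n1) g *
    ∏ i : Fin n1, ∏ j : Fin n2, kernelAt K (Fin.castAdd n2 i) (Fin.natAdd n1 j) with hP
  set Q := ∏ x : Fin (n1 + n2), ∏ l : Fin n3,
    kernelAt K (Fin.castAdd n3 x) (Fin.natAdd (n1 + n2) l) with hQ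
  have h1 : rename (Fin.castAdd n3) (rename (⇑τ) P)
      = rename (⇑(extPermL τ : Equiv.Perm (Fin (n1 + n2 + n3))))
          (rename (Fin.castAdd n3) P) := by
    rw [rename_rename, rename_rename]
    have hφ : Fin.castAdd n3 ∘ ⇑τ
        = ⇑(extPermL τ : Equiv.Perm (Fin (n1 + n2 + n3))) ∘ Fin.castAdd n3 :=
      funext fun x => (extPermL_castAdd τ x).symm
    rw [hφ]
  have h2 : rename (Fin.natAdd (n1 + n2)) h
      = rename (⇑(extPermL τ : Equiv.Perm (Fin (n1 + n2 + n3))))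
          (rename (Fin.natAdd (n1 + n2)) h) := by
    rw [rename_rename]
    have hφ : Fin.natAdd (n1 + n2)
        = ⇑(extPermL τ : Equiv.Perm (Fin (n1 + n2 + n3))) ∘ Fin.natAdd (n1 + n2) :=
      funext fun l => (extPermL_natAdd τ l).symm
    nth_rewrite 1 [hφ]
    rfl
  have h3 : Q = rename (⇑(extPermL τ : Equiv.Perm (Fin (n1 + n2 + n3)))) Q := by
    rw [hQ]
    simp only [map_prod, rename_kernelAt, extPermL_castAdd, extPermL_natAdd]
    exact (Equiv.prod_comp τ (fun x => ∏ l : Fin n3,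
      kernelAt K (Fin.castAdd n3 x) (Fin.natAdd (n1 + n2) l))).symm
  rw [h1]
  nth_rewrite 1 [h2]
  nth_rewrite 1 [h3]
  rw [← map_mul, ← map_mul, rename_rename, ← Equiv.Perm.coe_mul, prod_left_eq]

/-- The shuffle product with kernel `K`:
`(f * g) = Σ_σ σ·( f(s_1,…,s_{n1}) g(s_{n1+1},…,s_{n1+n2}) Π_{i ≤ n1 < j} K(s_i, s_j) )`,
where `σ` runs over `(n1, n2)`-shuffles. -/
noncomputable def shufMul (K : MvPolynomial (Fin 2) k) {n1 n2 : ℕ}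
    (f : MvPolynomial (Fin n1) k) (g : MvPolynomial (Fin n2) k) :
    MvPolynomial (Fin (n1 + n2)) k :=
  ∑ σ : Equiv.Perm (Fin (n1 + n2)),
    if IsShuffle n1 n2 σ then
      rename (⇑σ) (rename (Fin.castAdd n2) f * rename (Fin.natAdd n1) g *
        ∏ i : Fin n1, ∏ j : Fin n2, kernelAt K (Fin.castAdd n2 i) (Fin.natAdd n1 j))
    else 0

/-- The triple shuffle product: the sum over `(n1,n2,n3)`-shuffles of
`σ·( f g h · Π_{blocks 1×2} K · Π_{blocks 1×3} K · Π_{blocks 2×3} K )`. -/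
noncomputable def shufMul3 (K : MvPolynomial (Fin 2) k) {n1 n2 n3 : ℕ}
    (f : MvPolynomial (Fin n1) k) (g : MvPolynomial (Fin n2) k)
    (h : MvPolynomial (Fin n3) k) : MvPolynomial (Fin (n1 + n2 + n3)) k :=
  ∑ σ : Equiv.Perm (Fin (n1 + n2 + n3)),
    if IsShuffle3 n1 n2 n3 σ then
      rename (⇑σ) (rename (fun i : Fin n1 => Fin.castAdd n3 (Fin.castAdd n2 i)) f *
        rename (fun j : Fin n2 => Fin.castAdd n3 (Fin.natAdd n1 j)) g *
        rename (Fin.natAdd (n1 + n2)) h *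
        (∏ i : Fin n1, ∏ j : Fin n2,
          kernelAt K (Fin.castAdd n3 (Fin.castAdd n2 i)) (Fin.castAdd n3 (Fin.natAdd n1 j))) *
        (∏ i : Fin n1, ∏ l : Fin n3,
          kernelAt K (Fin.castAdd n3 (Fin.castAdd n2 i)) (Fin.natAdd (n1 + n2) l)) *
        (∏ j : Fin n2, ∏ l : Fin n3,
          kernelAt K (Fin.castAdd n3 (Fin.natAdd n1 j)) (Fin.natAdd (n1 + n2) l)))
    else 0

lemma shufMul3_eq_sum (K : MvPolynomial (Fin 2) k) {n1 n2 n3 : ℕ}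
    (f : MvPolynomial (Fin n1) k) (g : MvPolynomial (Fin n2) k)
    (h : MvPolynomial (Fin n3) k) :
    shufMul3 K f g h = ∑ ρ : Equiv.Perm (Fin (n1 + n2 + n3)),
      if IsShuffle3 n1 n2 n3 ρ then rename (⇑ρ) (bigL K f g h) else 0 := rfl

lemma left_assoc_eq (K : MvPolynomial (Fin 2) k) {n1 n2 n3 : ℕ}
    (f : MvPolynomial (Fin n1) k) (g : MvPolynomial (Fin n2) k)
    (h : MvPolynomial (Fin n3) k) :
    shufMul K (shufMul K f g) h = shufMul3 K f g h := by
  have hexp : shufMul K (shufMul K f g) h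
      = ∑ σ : Equiv.Perm (Fin (n1 + n2 + n3)), if IsShuffle (n1 + n2) n3 σ then
          (∑ τ : Equiv.Perm (Fin (n1 + n2)), if IsShuffle n1 n2 τ then
            rename (⇑(σ * extPermL τ : Equiv.Perm (Fin (n1 + n2 + n3)))) (bigL K f g h)
          else 0) else 0 := by
    unfold shufMul
    refine Finset.sum_congr rfl fun σ _ => ?_
    split_ifs with hσ
    · rw [map_sum, Finset.sum_mul, Finset.sum_mul, map_sum]
      refine Finset.sum_congr rfl fun τ _ => ?_
      rw [apply_ite (rename (Fin.castAdd n3)), map_zero, ite_mul, zero_mul, ite_mul, zero_mul,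
        apply_ite (rename (⇑σ)), map_zero]
      split_ifs with hτ
      · exact summand_left K f g h σ τ
      · rfl
    · rfl
  rw [hexp, sum_shuffle_pairs_left (fun ρ => rename (⇑ρ) (bigL K f g h)), shufMul3_eq_sum]

lemma prod_right_eq (K : MvPolynomial (Fin 2) k) {n1 n2 n3 : ℕ}
    (f : MvPolynomial (Fin n1) k) (g : MvPolynomial (Fin n2) k)
    (h : MvPolynomial (Fin n3) k) :
    rename (Fin.castAdd (n2 + n3)) f *
      rename (Fin.natAdd n1) (rename (Fin.castAdd n3) g * rename (Fin.natAdd n2) h *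
        ∏ j : Fin n2, ∏ l : Fin n3, kernelAt K (Fin.castAdd n3 j) (Fin.natAdd n2 l)) *
      ∏ i : Fin n1, ∏ x : Fin (n2 + n3), kernelAt K (Fin.castAdd (n2 + n3) i) (Fin.natAdd n1 x)
    = bigR K f g h := by
  unfold bigR
  simp only [map_mul, map_prod, rename_rename, rename_kernelAt, Function.comp_def]
  have hsplit : (∏ i : Fin n1, ∏ x : Fin (n2 + n3),
        kernelAt K (Fin.castAdd (n2 + n3) i) (Fin.natAdd n1 x))
      = (∏ i : Fin n1, ∏ j : Fin n2,
          kernelAt K (Fin.castAdd (n2 + n3) i) (Fin.natAdd n1 (Fin.castAdd n3 j))) *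
        (∏ i : Fin n1, ∏ l : Fin n3,
          kernelAt K (Fin.castAdd (n2 + n3) i) (Fin.natAdd n1 (Fin.natAdd n2 l))) := by
    rw [← Finset.prod_mul_distrib]
    refine Finset.prod_congr rfl fun i _ => ?_
    exact Fin.prod_univ_add
      (f := fun x : Fin (n2 + n3) => kernelAt K (Fin.castAdd (n2 + n3) i) (Fin.natAdd n1 x))
  rw [hsplit]
  ring

lemma summand_right (K : MvPolynomial (Fin 2) k) {n1 n2 n3 : ℕ}
    (f : MvPolynomial (Fin n1) k) (g : MvPolynomial (Fin n2) k)
    (h : MvPolynomial (Fin n3) k) (σ : Equiv.Perm (Fin (n1 + (n2 + n3))))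
    (τ : Equiv.Perm (Fin (n2 + n3))) :
    rename (⇑σ) (rename (Fin.castAdd (n2 + n3)) f *
      rename (Fin.natAdd n1)
        (rename (⇑τ) (rename (Fin.castAdd n3) g * rename (Fin.natAdd n2) h *
          ∏ j : Fin n2, ∏ l : Fin n3, kernelAt K (Fin.castAdd n3 j) (Fin.natAdd n2 l))) *
      ∏ i : Fin n1, ∏ x : Fin (n2 + n3), kernelAt K (Fin.castAdd (n2 + n3) i) (Fin.natAdd n1 x))
    = rename (⇑(σ * extPermR τ : Equiv.Perm (Fin (n1 + (n2 + n3))))) (bigR K f g h) := by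
  set P := rename (Fin.castAdd n3) g * rename (Fin.natAdd n2) h *
    ∏ j : Fin n2, ∏ l : Fin n3, kernelAt K (Fin.castAdd n3 j) (Fin.natAdd n2 l) with hP
  set Q := ∏ i : Fin n1, ∏ x : Fin (n2 + n3),
    kernelAt K (Fin.castAdd (n2 + n3) i) (Fin.natAdd n1 x) with hQ
  have h1 : rename (Fin.natAdd n1) (rename (⇑τ) P)
      = rename (⇑(extPermR τ : Equiv.Perm (Fin (n1 + (n2 + n3)))))
          (rename (Fin.natAdd n1) P) := by
    rw [rename_rename, rename_rename]
    have hφ : Fin.natAdd n1 ∘ ⇑τ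
        = ⇑(extPermR τ : Equiv.Perm (Fin (n1 + (n2 + n3)))) ∘ Fin.natAdd n1 :=
      funext fun x => (extPermR_natAdd τ x).symm
    rw [hφ]
  have h2 : rename (Fin.castAdd (n2 + n3)) f
      = rename (⇑(extPermR τ : Equiv.Perm (Fin (n1 + (n2 + n3)))))
          (rename (Fin.castAdd (n2 + n3)) f) := by
    rw [rename_rename]
    have hφ : Fin.castAdd (n2 + n3)
        = ⇑(extPermR τ : Equiv.Perm (Fin (n1 + (n2 + n3)))) ∘ Fin.castAdd (n2 + n3) :=
      funext fun i => (extPermR_castAdd τ i).symm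
    nth_rewrite 1 [hφ]
    rfl
  have h3 : Q = rename (⇑(extPermR τ : Equiv.Perm (Fin (n1 + (n2 + n3))))) Q := by
    rw [hQ]
    simp only [map_prod, rename_kernelAt, extPermR_castAdd, extPermR_natAdd]
    exact (Finset.prod_congr rfl fun i _ => Equiv.prod_comp τ (fun x =>
      kernelAt K (Fin.castAdd (n2 + n3) i) (Fin.natAdd n1 x))).symm
  rw [h1]
  nth_rewrite 1 [h2]
  nth_rewrite 1 [h3]
  rw [← map_mul, ← map_mul, rename_rename, ← Equiv.Perm.coe_mul, prod_right_eq]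

lemma right_assoc_eq (K : MvPolynomial (Fin 2) k) {n1 n2 n3 : ℕ}
    (f : MvPolynomial (Fin n1) k) (g : MvPolynomial (Fin n2) k)
    (h : MvPolynomial (Fin n3) k) :
    shufMul K f (shufMul K g h) = ∑ ρ : Equiv.Perm (Fin (n1 + (n2 + n3))),
      if IsShuffle3R n1 n2 n3 ρ then rename (⇑ρ) (bigR K f g h) else 0 := by
  have hexp : shufMul K f (shufMul K g h)
      = ∑ σ : Equiv.Perm (Fin (n1 + (n2 + n3))), if IsShuffle n1 (n2 + n3) σ then
          (∑ τ : Equiv.Perm (Fin (n2 + n3)), if IsShuffle n2 n3 τ then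
            rename (⇑(σ * extPermR τ : Equiv.Perm (Fin (n1 + (n2 + n3))))) (bigR K f g h)
          else 0) else 0 := by
    unfold shufMul
    refine Finset.sum_congr rfl fun σ _ => ?_
    split_ifs with hσ
    · rw [map_sum, Finset.mul_sum, Finset.sum_mul, map_sum]
      refine Finset.sum_congr rfl fun τ _ => ?_
      rw [apply_ite (rename (Fin.natAdd n1)), map_zero, mul_ite, mul_zero, ite_mul, zero_mul,
        apply_ite (rename (⇑σ)), map_zero]
      split_ifs with hτ
      · exact summand_right K f g h σ τ
      · rfl
    · rfl
  rw [hexp, sum_shuffle_pairs_right (fun ρ => rename (⇑ρ) (bigR K f g h))]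

lemma strictMono_finCongr_comp {a b m : ℕ} (hab : a = b) (u : Fin m → Fin a) :
    StrictMono (fun i => (finCongr hab) (u i)) ↔ StrictMono u := by
  subst hab
  simp

lemma rename_finCongr_bigL (K : MvPolynomial (Fin 2) k) {n1 n2 n3 : ℕ}
    (f : MvPolynomial (Fin n1) k) (g : MvPolynomial (Fin n2) k)
    (h : MvPolynomial (Fin n3) k) :
    rename (⇑(finCongr (Nat.add_assoc n1 n2 n3))) (bigL K f g h) = bigR K f g h := by
  unfold bigL bigR
  simp only [map_mul, map_prod, rename_rename, rename_kernelAt, Function.comp_def]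
  have pc1 : ∀ i : Fin n1, (finCongr (Nat.add_assoc n1 n2 n3))
      (Fin.castAdd n3 (Fin.castAdd n2 i)) = Fin.castAdd (n2 + n3) i := fun i => by
    apply Fin.ext
    simp only [finCongr_apply, Fin.coe_cast, Fin.coe_castAdd]
  have pc2 : ∀ j : Fin n2, (finCongr (Nat.add_assoc n1 n2 n3))
      (Fin.castAdd n3 (Fin.natAdd n1 j)) = Fin.natAdd n1 (Fin.castAdd n3 j) := fun j => by
    apply Fin.ext
    simp only [finCongr_apply, Fin.coe_cast, Fin.coe_castAdd, Fin.coe_natAdd]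
  have pc3 : ∀ l : Fin n3, (finCongr (Nat.add_assoc n1 n2 n3))
      (Fin.natAdd (n1 + n2) l) = Fin.natAdd n1 (Fin.natAdd n2 l) := fun l => by
    apply Fin.ext
    simp only [finCongr_apply, Fin.coe_cast, Fin.coe_natAdd]
    omega
  simp only [pc1, pc2, pc3]

lemma shuffle3_iff (n1 n2 n3 : ℕ) (ρ : Equiv.Perm (Fin (n1 + n2 + n3))) :
    IsShuffle3 n1 n2 n3 ρ ↔ IsShuffle3R n1 n2 n3
      ((finCongr (Nat.add_assoc n1 n2 n3)).permCongr ρ) := by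
  have hsym1 : ∀ i : Fin n1, (finCongr (Nat.add_assoc n1 n2 n3)).symm
      (Fin.castAdd (n2 + n3) i) = Fin.castAdd n3 (Fin.castAdd n2 i) := fun i => by
    apply Fin.ext
    simp [Fin.coe_castAdd]
  have hsym2 : ∀ j : Fin n2, (finCongr (Nat.add_assoc n1 n2 n3)).symm
      (Fin.natAdd n1 (Fin.castAdd n3 j)) = Fin.castAdd n3 (Fin.natAdd n1 j) := fun j => by
    apply Fin.ext
    simp [Fin.coe_castAdd, Fin.coe_natAdd]
  have hsym3 : ∀ l : Fin n3, (finCongr (Nat.add_assoc n1 n2 n3)).symm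
      (Fin.natAdd n1 (Fin.natAdd n2 l)) = Fin.natAdd (n1 + n2) l := fun l => by
    apply Fin.ext
    simp [Fin.coe_natAdd]
    omega
  have hc1 : (fun i : Fin n1 => ((finCongr (Nat.add_assoc n1 n2 n3)).permCongr ρ)
      (Fin.castAdd (n2 + n3) i))
      = fun i => (finCongr (Nat.add_assoc n1 n2 n3)) (ρ (Fin.castAdd n3 (Fin.castAdd n2 i))) :=
    funext fun i => by rw [Equiv.permCongr_apply, hsym1 i]
  have hc2 : (fun j : Fin n2 => ((finCongr (Nat.add_assoc n1 n2 n3)).permCongr ρ)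
      (Fin.natAdd n1 (Fin.castAdd n3 j)))
      = fun j => (finCongr (Nat.add_assoc n1 n2 n3)) (ρ (Fin.castAdd n3 (Fin.natAdd n1 j))) :=
    funext fun j => by rw [Equiv.permCongr_apply, hsym2 j]
  have hc3 : (fun l : Fin n3 => ((finCongr (Nat.add_assoc n1 n2 n3)).permCongr ρ)
      (Fin.natAdd n1 (Fin.natAdd n2 l)))
      = fun l => (finCongr (Nat.add_assoc n1 n2 n3)) (ρ (Fin.natAdd (n1 + n2) l)) :=
    funext fun l => by rw [Equiv.permCongr_apply, hsym3 l]
  unfold IsShuffle3 IsShuffle3R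
  rw [hc1, hc2, hc3, strictMono_finCongr_comp, strictMono_finCongr_comp,
    strictMono_finCongr_comp]

lemma rename_finCongr_shufMul3 (K : MvPolynomial (Fin 2) k) {n1 n2 n3 : ℕ}
    (f : MvPolynomial (Fin n1) k) (g : MvPolynomial (Fin n2) k)
    (h : MvPolynomial (Fin n3) k) :
    rename (⇑(finCongr (Nat.add_assoc n1 n2 n3))) (shufMul3 K f g h)
    = ∑ ρ' : Equiv.Perm (Fin (n1 + (n2 + n3))),
        if IsShuffle3R n1 n2 n3 ρ' then rename (⇑ρ') (bigR K f g h) else 0 := by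
  rw [shufMul3_eq_sum, map_sum]
  rw [← Equiv.sum_comp ((finCongr (Nat.add_assoc n1 n2 n3)).permCongr)
    (fun ρ' => if IsShuffle3R n1 n2 n3 ρ' then rename (⇑ρ') (bigR K f g h) else 0)]
  refine Finset.sum_congr rfl fun ρ _ => ?_
  rw [apply_ite (rename (⇑(finCongr (Nat.add_assoc n1 n2 n3)))), map_zero]
  have hcomm : rename (⇑(finCongr (Nat.add_assoc n1 n2 n3))) (rename (⇑ρ) (bigL K f g h))
      = rename (⇑((finCongr (Nat.add_assoc n1 n2 n3)).permCongr ρ)) (bigR K f g h) := by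
    rw [rename_rename, ← rename_finCongr_bigL K f g h, rename_rename]
    have hφ : ⇑(finCongr (Nat.add_assoc n1 n2 n3)) ∘ ⇑ρ
        = ⇑((finCongr (Nat.add_assoc n1 n2 n3)).permCongr ρ)
          ∘ ⇑(finCongr (Nat.add_assoc n1 n2 n3)) :=
      funext fun x => by simp [Equiv.permCongr_apply]
    rw [hφ]
  by_cases h1 : IsShuffle3 n1 n2 n3 ρ
  · rw [if_pos h1, if_pos ((shuffle3_iff n1 n2 n3 ρ).mp h1), hcomm]
  · rw [if_neg h1, if_neg (fun hc => h1 ((shuffle3_iff n1 n2 n3 ρ).mpr hc))]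

/-- the shuffle product with a two-variable kernel `K` is associative on
symmetric polynomials: `(f * g) * h = f * (g * h)` (after the canonical re-indexing of
variables along `(n1+n2)+n3 = n1+(n2+n3)`), both sides being equal to the single sum over
`(n1,n2,n3)`-shuffles of `σ·(f·g·h·Π K·Π K·Π K)`. -/
theorem shuffle_product_assoc
    (K : MvPolynomial (Fin 2) k) (n1 n2 n3 : ℕ)
    (f : MvPolynomial (Fin n1) k) (hf : ∀ τ : Equiv.Perm (Fin n1), rename (⇑τ) f = f)
    (g : MvPolynomial (Fin n2) k) (hg : ∀ τ : Equiv.Perm (Fin n2), rename (⇑τ) g = g)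
    (h : MvPolynomial (Fin n3) k) (hh : ∀ τ : Equiv.Perm (Fin n3), rename (⇑τ) h = h) :
    rename (⇑(finCongr (Nat.add_assoc n1 n2 n3))) (shufMul K (shufMul K f g) h) =
      shufMul K f (shufMul K g h) ∧
    shufMul K (shufMul K f g) h = shufMul3 K f g h := by
  have h2 := left_assoc_eq K f g h
  have h1 : rename (⇑(finCongr (Nat.add_assoc n1 n2 n3))) (shufMul3 K f g h)
      = shufMul K f (shufMul K g h) := by
    rw [rename_finCongr_shufMul3, ← right_assoc_eq]
  exact ⟨by rw [h2, h1], h2⟩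
end

section
/- Let k be an integral domain of characteristic zero (or any commutative ring where the relevant divisions make sense in the fraction field) and let f ∈ k[s_1, …, s_n]. Then the full Weyl symmetrization Σ_{w ∈ S_n} w · ( f / Π_{1 ≤ i < j ≤ n} (s_i − s_j) ), computed in the fraction field, is in fact a polynomial, and moreover a symmetric polynomial in s_1, …, s_n. -/
open Equiv MvPolynomial

open scoped Classical

variable {k : Type*} [CommRing k] [IsDomain k]

/-- The field homomorphism between fraction fields of polynomial rings induced by an
injective renaming of variables. -/
noncomputable def fracMap {σ τ : Type*} (e : σ → τ) (he : Function.Injective e) :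
    FractionRing (MvPolynomial σ k) →+* FractionRing (MvPolynomial τ k) :=
  IsFractionRing.lift
    (g := (algebraMap (MvPolynomial τ k) (FractionRing (MvPolynomial τ k))).comp
      (rename e : MvPolynomial σ k →ₐ[k] MvPolynomial τ k).toRingHom)
    (by
      exact (IsFractionRing.injective (MvPolynomial τ k)
        (FractionRing (MvPolynomial τ k))).comp (rename_injective e he))


set_option maxHeartbeats 1000000

section Aux

variable {n : ℕ}

/-- substitution collapsing variable `j` to `i` -/
private noncomputable def collapse (i j : Fin n) : Fin n → Fin n := fun t => if t = j then i else t

private lemma dvd_sub_rename_collapse (i j : Fin n) (p : MvPolynomial (Fin n) k) :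
    (X i - X j : MvPolynomial (Fin n) k) ∣ p - rename (collapse i j) p := by
  induction p using MvPolynomial.induction_on with
  | C a => simp
  | add p q hp hq =>
    have : p + q - rename (collapse i j) (p + q)
        = (p - rename (collapse i j) p) + (q - rename (collapse i j) q) := by
      rw [map_add]; ring
    rw [this]; exact dvd_add hp hq
  | mul_X p t hp =>
    have : p * X t - rename (collapse i j) (p * X t)
        = (p - rename (collapse i j) p) * X t
          + rename (collapse i j) p * (X t - X (collapse i j t)) := by
      rw [map_mul, rename_X]; ring
    rw [this]
    refine dvd_add (Dvd.dvd.mul_right hp _) (Dvd.dvd.mul_left ?_ _)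
    by_cases h : t = j
    · subst h
      have hco : collapse i t t = i := by simp [collapse]
      rw [hco]
      exact ⟨-1, by ring⟩
    · simp [collapse, h]

private lemma dvd_of_rename_collapse_eq_zero {i j : Fin n} (p : MvPolynomial (Fin n) k)
    (h : rename (collapse i j) p = 0) : (X i - X j : MvPolynomial (Fin n) k) ∣ p := by
  have := dvd_sub_rename_collapse i j p
  rwa [h, sub_zero] at this

private lemma rename_collapse_eq_zero_of_dvd {i j : Fin n} (hij : i ≠ j)
    {p : MvPolynomial (Fin n) k} (h : (X i - X j : MvPolynomial (Fin n) k) ∣ p) :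
    rename (collapse i j) p = 0 := by
  obtain ⟨q, rfl⟩ := h
  have : rename (collapse i j) (X i - X j : MvPolynomial (Fin n) k) = 0 := by
    rw [map_sub, rename_X, rename_X]
    simp [collapse, hij]
  rw [map_mul, this, zero_mul]

private lemma X_sub_X_ne_zero {i j : Fin n} (hij : i ≠ j) :
    (X i - X j : MvPolynomial (Fin n) k) ≠ 0 :=
  sub_ne_zero_of_ne (fun h => hij (MvPolynomial.X_injective h))

private lemma prime_X_sub_X {i j : Fin n} (hij : i ≠ j) :
    Prime (X i - X j : MvPolynomial (Fin n) k) := by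
  refine ⟨X_sub_X_ne_zero hij, ?_, ?_⟩
  · intro hu
    have hu' : IsUnit ((aeval (fun t : Fin n => if t = i then (Polynomial.X : Polynomial k) else 0))
        (X i - X j)) := hu.map _
    rw [map_sub, aeval_X, aeval_X, if_pos rfl, if_neg (Ne.symm hij), sub_zero] at hu'
    exact Polynomial.not_isUnit_X hu'
  · intro a b hab
    have h0 : rename (collapse i j) a * rename (collapse i j) b = 0 := by
      rw [← map_mul]
      exact rename_collapse_eq_zero_of_dvd hij hab
    rcases mul_eq_zero.mp h0 with h | h
    · exact Or.inl (dvd_of_rename_collapse_eq_zero a h)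
    · exact Or.inr (dvd_of_rename_collapse_eq_zero b h)

/-- product of pairwise non-associate primes divides -/
private lemma prod_primes_dvd'' {R : Type*} [CommRing R] [IsDomain R] {α : Type*}
    [DecidableEq α] (s : Finset α) (F : α → R)
    (hp : ∀ a ∈ s, Prime (F a)) (hnd : ∀ a ∈ s, ∀ b ∈ s, a ≠ b → ¬ F a ∣ F b) {x : R}
    (hd : ∀ a ∈ s, F a ∣ x) : (∏ a ∈ s, F a) ∣ x := by
  induction s using Finset.induction_on generalizing x with
  | empty => simpa using one_dvd x
  | insert _ _ ha ih =>
    rename_i a s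
    obtain ⟨y, rfl⟩ := hd a (Finset.mem_insert_self a s)
    rw [Finset.prod_insert ha]
    refine mul_dvd_mul_left _ (ih (fun b hb => hp b (Finset.mem_insert_of_mem hb))
      (fun b hb c hc hbc => hnd b (Finset.mem_insert_of_mem hb) c (Finset.mem_insert_of_mem hc) hbc)
      (fun b hb => ?_))
    have hba : b ≠ a := fun h => ha (h ▸ hb)
    have hprime := hp b (Finset.mem_insert_of_mem hb)
    have hdvd : F b ∣ F a * y := hd b (Finset.mem_insert_of_mem hb)
    rcases hprime.2.2 _ _ hdvd with h | h
    · exact absurd h (hnd b (Finset.mem_insert_of_mem hb) a (Finset.mem_insert_self a s) hba)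
    · exact h

end Aux

section Main

variable {n : ℕ} [CharZero k]

private noncomputable def Δpoly (n : ℕ) (k : Type*) [CommRing k] : MvPolynomial (Fin n) k :=
  ∏ p ∈ Finset.univ.filter (fun p : Fin n × Fin n => p.1 < p.2), (X p.1 - X p.2)

private noncomputable def Apoly (f : MvPolynomial (Fin n) k) : MvPolynomial (Fin n) k :=
  ∑ w : Equiv.Perm (Fin n), (Equiv.Perm.sign w : ℤ) • rename (⇑w) f

private lemma delta_as_double :
    (Δpoly n k : MvPolynomial (Fin n) k)
      = ∏ i : Fin n, ∏ j ∈ Finset.Ioi i, (X i - X j) := by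
  rw [Δpoly]
  exact Finset.prod_finset_product'
    (f := fun i j => (X i - X j : MvPolynomial (Fin n) k))
    (Finset.univ.filter (fun p : Fin n × Fin n => p.1 < p.2))
    Finset.univ (fun i => Finset.Ioi i) (fun p => by simp [Finset.mem_Ioi])

private lemma delta_ne_zero : (Δpoly n k : MvPolynomial (Fin n) k) ≠ 0 := by
  rw [Δpoly]
  rw [Finset.prod_ne_zero_iff]
  intro p hp
  exact X_sub_X_ne_zero (Finset.mem_filter.mp hp).2.ne

private lemma rename_delta (w : Equiv.Perm (Fin n)) :
    rename (⇑w) (Δpoly n k) = (Equiv.Perm.sign w : ℤ) • Δpoly n k := by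
  classical
  have hdet : (Matrix.vandermonde (fun i : Fin n => (X i : MvPolynomial (Fin n) k))).det
      = ∏ i : Fin n, ∏ j ∈ Finset.Ioi i, (X j - X i) := Matrix.det_vandermonde _
  set c : MvPolynomial (Fin n) k := ∏ i : Fin n, ∏ j ∈ Finset.Ioi i, (-1 : MvPolynomial (Fin n) k)
    with hc
  have hΔ : (Δpoly n k : MvPolynomial (Fin n) k)
      = c * (Matrix.vandermonde (fun i : Fin n => (X i : MvPolynomial (Fin n) k))).det := by
    rw [delta_as_double, hdet, hc, ← Finset.prod_mul_distrib]
    refine Finset.prod_congr rfl fun i _ => ?_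
    rw [← Finset.prod_mul_distrib]
    exact Finset.prod_congr rfl fun j _ => by ring
  have hcfix : rename (⇑w) c = c := by
    rw [hc, map_prod]
    refine Finset.prod_congr rfl fun i _ => ?_
    rw [map_prod]
    refine Finset.prod_congr rfl fun j _ => ?_
    rw [map_neg, map_one]
  have hmapdet : rename (⇑w)
      (Matrix.vandermonde (fun i : Fin n => (X i : MvPolynomial (Fin n) k))).det
      = (Equiv.Perm.sign w : ℤ) •
        (Matrix.vandermonde (fun i : Fin n => (X i : MvPolynomial (Fin n) k))).det := by
    rw [(rename (⇑w) : MvPolynomial (Fin n) k →ₐ[k] MvPolynomial (Fin n) k).map_det,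
      AlgHom.mapMatrix_apply]
    have : (Matrix.vandermonde (fun i : Fin n => (X i : MvPolynomial (Fin n) k))).map
        (rename (⇑w))
        = (Matrix.vandermonde (fun i : Fin n => (X i : MvPolynomial (Fin n) k))).submatrix
          (⇑w) id := by
      ext i j
      simp [Matrix.vandermonde, Matrix.map_apply, Matrix.submatrix_apply]
    rw [this, Matrix.det_permute]
    rcases Int.units_eq_one_or (Equiv.Perm.sign w) with h | h <;> simp [h]
  rw [hΔ, map_mul, hcfix, hmapdet, mul_smul_comm]

private lemma rename_collapse_apoly {i j : Fin n} (hij : i < j) (f : MvPolynomial (Fin n) k) :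
    rename (collapse i j) (Apoly f) = 0 := by
  classical
  rw [Apoly, map_sum]
  have key : ∀ w : Equiv.Perm (Fin n),
      rename (collapse i j) ((Equiv.Perm.sign w : ℤ) • rename (⇑w) f)
        = (Equiv.Perm.sign w : ℤ) • rename (collapse i j ∘ ⇑w) f := by
    intro w
    rw [map_zsmul, rename_rename]
  have hcomp : collapse i j ∘ ⇑(Equiv.swap i j) = collapse i j := by
    funext x
    rcases eq_or_ne x i with rfl | hxi
    · simp [collapse, Equiv.swap_apply_left, hij.ne]
    · rcases eq_or_ne x j with rfl | hxj
      · simp [collapse, Equiv.swap_apply_right, hij.ne]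
      · simp [collapse, Equiv.swap_apply_of_ne_of_ne hxi hxj]
  refine Finset.sum_ninvolution (fun w => Equiv.swap i j * w) ?_ ?_ (fun _ => Finset.mem_univ _) ?_
  · intro w
    rw [key, key]
    have h1 : (Equiv.Perm.sign (Equiv.swap i j * w) : ℤ) = -(Equiv.Perm.sign w : ℤ) := by
      rw [map_mul, Equiv.Perm.sign_swap hij.ne]
      simp
    have h2 : collapse i j ∘ ⇑(Equiv.swap i j * w) = collapse i j ∘ ⇑w := by
      rw [Equiv.Perm.coe_mul, ← Function.comp_assoc, hcomp]
    rw [h1, h2, neg_smul]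
    exact add_neg_cancel _
  · intro w _ h
    have h2 : Equiv.swap i j = 1 := mul_right_cancel (h.trans (one_mul w).symm)
    have h3 := congrArg (fun e : Equiv.Perm (Fin n) => e i) h2
    simp [Equiv.swap_apply_left] at h3
    exact hij.ne h3.symm
  · intro w
    simp only [← mul_assoc, Equiv.swap_mul_self, one_mul]

private lemma delta_dvd_apoly (f : MvPolynomial (Fin n) k) :
    (Δpoly n k : MvPolynomial (Fin n) k) ∣ Apoly f := by
  classical
  rw [Δpoly]
  refine prod_primes_dvd'' _ _ ?_ ?_ ?_
  · intro p hp
    exact prime_X_sub_X (Finset.mem_filter.mp hp).2.ne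
  · intro p hp q hq hpq hdvd
    have hp' := (Finset.mem_filter.mp hp).2
    have hq' := (Finset.mem_filter.mp hq).2
    have h0 : rename (collapse p.1 p.2) (X q.1 - X q.2 : MvPolynomial (Fin n) k) = 0 :=
      rename_collapse_eq_zero_of_dvd hp'.ne hdvd
    rw [map_sub, rename_X, rename_X, sub_eq_zero] at h0
    have := MvPolynomial.X_injective h0
    -- derive contradiction: collapse p.1 p.2 q.1 = collapse p.1 p.2 q.2 with distinct args
    simp only [collapse] at this
    split_ifs at this with h1 h2 h2
    · exact hq'.ne (h1.trans h2.symm)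
    · exact absurd ((hp'.trans_eq h1.symm).trans (hq'.trans_eq this.symm)) (lt_irrefl _)
    · exact hpq (Prod.ext this.symm h2.symm)
    · exact hq'.ne this
  · intro p hp
    exact dvd_of_rename_collapse_eq_zero _
      (rename_collapse_apoly (Finset.mem_filter.mp hp).2 f)

end Main

section Main2

variable {n : ℕ} [CharZero k]

private lemma rename_apoly (v : Equiv.Perm (Fin n)) (f : MvPolynomial (Fin n) k) :
    rename (⇑v) (Apoly f) = (Equiv.Perm.sign v : ℤ) • Apoly f := by
  classical
  unfold Apoly
  rw [map_sum, Finset.smul_sum]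
  refine Fintype.sum_equiv (Equiv.mulLeft v) _ _ (fun w => ?_)
  have e1 : (Equiv.mulLeft v) w = v * w := rfl
  rw [e1, map_zsmul, rename_rename, ← Equiv.Perm.coe_mul, smul_smul]
  congr 1
  rw [map_mul, Units.val_mul, ← mul_assoc]
  rcases Int.units_eq_one_or (Equiv.Perm.sign v) with h | h <;> simp [h]


end Main2

/-- the full Weyl symmetrization `Σ_{w ∈ S_n} w·( f / Π_{i<j}(s_i − s_j) )`,
computed in the fraction field, is (the image of) a symmetric polynomial in `s_1,…,s_n`. -/
theorem weyl_symmetrization_is_symmetric_polynomial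
    [CharZero k] (n : ℕ) (f : MvPolynomial (Fin n) k) :
    ∃ g : MvPolynomial (Fin n) k,
      (∀ w : Equiv.Perm (Fin n), rename (⇑w) g = g) ∧
      algebraMap (MvPolynomial (Fin n) k) (FractionRing (MvPolynomial (Fin n) k)) g =
        ∑ w : Equiv.Perm (Fin n),
          fracMap (⇑w) w.injective
            (algebraMap (MvPolynomial (Fin n) k) (FractionRing (MvPolynomial (Fin n) k)) f /
              algebraMap (MvPolynomial (Fin n) k) (FractionRing (MvPolynomial (Fin n) k))
                (∏ p ∈ Finset.univ.filter (fun p : Fin n × Fin n => p.1 < p.2),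
                  (X p.1 - X p.2))) := by
  classical
  obtain ⟨g, hg⟩ := delta_dvd_apoly f
  have hR : True := trivial
  refine ⟨g, ?_, ?_⟩
  · intro v
    have h1 := rename_apoly v f
    rw [hg, map_mul, rename_delta] at h1
    rcases Int.units_eq_one_or (Equiv.Perm.sign v) with h | h
    · rw [h] at h1
      simp only [Units.val_one, one_smul] at h1
      exact mul_left_cancel₀ delta_ne_zero h1
    · rw [h] at h1
      simp only [Units.val_neg, Units.val_one, neg_smul, one_smul, neg_mul, neg_inj] at h1
      exact mul_left_cancel₀ delta_ne_zero h1
  · have hι : Function.Injective (algebraMap (MvPolynomial (Fin n) k) (FractionRing (MvPolynomial (Fin n) k))) :=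
      IsFractionRing.injective (MvPolynomial (Fin n) k) (FractionRing (MvPolynomial (Fin n) k))
    have hΔK : algebraMap (MvPolynomial (Fin n) k) (FractionRing (MvPolynomial (Fin n) k)) (Δpoly n k) ≠ 0 := fun h =>
      delta_ne_zero (hι (by simpa using h))
    have hfrac : ∀ (w : Equiv.Perm (Fin n)) (a : MvPolynomial (Fin n) k),
        fracMap (⇑w) w.injective (algebraMap (MvPolynomial (Fin n) k) (FractionRing (MvPolynomial (Fin n) k)) a) = algebraMap (MvPolynomial (Fin n) k) (FractionRing (MvPolynomial (Fin n) k)) (rename (⇑w) a) :=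
      fun w a => IsFractionRing.lift_algebraMap _ a
    have hΔdef : (∏ p ∈ Finset.univ.filter (fun p : Fin n × Fin n => p.1 < p.2),
        (X p.1 - X p.2) : MvPolynomial (Fin n) k) = Δpoly n k := rfl
    rw [hΔdef]
    have hterm : ∀ w : Equiv.Perm (Fin n),
        fracMap (⇑w) w.injective (algebraMap (MvPolynomial (Fin n) k) (FractionRing (MvPolynomial (Fin n) k)) f / algebraMap (MvPolynomial (Fin n) k) (FractionRing (MvPolynomial (Fin n) k)) (Δpoly n k))
          = algebraMap (MvPolynomial (Fin n) k) (FractionRing (MvPolynomial (Fin n) k)) ((Equiv.Perm.sign w : ℤ) • rename (⇑w) f)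
            / algebraMap (MvPolynomial (Fin n) k) (FractionRing (MvPolynomial (Fin n) k)) (Δpoly n k) := by
      intro w
      rw [map_div₀, hfrac, hfrac, rename_delta]
      rcases Int.units_eq_one_or (Equiv.Perm.sign w) with h | h <;>
        simp [h, div_neg, neg_div]
    have hA : (∑ w : Equiv.Perm (Fin n), (Equiv.Perm.sign w : ℤ) • rename (⇑w) f) = Apoly f :=
      rfl
    rw [Finset.sum_congr rfl (fun w _ => hterm w), ← Finset.sum_div, ← map_sum, hA, hg,
      map_mul, mul_div_cancel_left₀ _ hΔK]
end
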